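/- For real x > 0 and y > 0, the Cauchy principal value of R_C(x, −y) satisfies p.v. R_C(x,−y) = (x/(x+y))^{1/2} R_C(x+y, y), where the left side is the principal value of (1/2)∫₀^∞ (t+x)^{-1/2} (t−y)^{-1} dt. -/

import Mathlib

open MeasureTheory Real

noncomputable def RC (x y : ℝ) : ℝ :=
  (1/2) * ∫ t in Set.Ioi (0:ℝ), (Real.sqrt (t + x))⁻¹ * (t + y)⁻¹

noncomputable def RF (x y z : ℝ) : ℝ :=
  (1/2) * ∫ t in Set.Ioi (0:ℝ), (Real.sqrt ((t + x) * (t + y) * (t + z)))⁻¹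

noncomputable def RD (x y z : ℝ) : ℝ :=
  (3/2) * ∫ t in Set.Ioi (0:ℝ),
    (Real.sqrt ((t + x) * (t + y)))⁻¹ * ((t + z) * Real.sqrt (t + z))⁻¹

noncomputable def RJ (x y z p : ℝ) : ℝ :=
  (3/2) * ∫ t in Set.Ioi (0:ℝ),
    (Real.sqrt ((t + x) * (t + y) * (t + z)))⁻¹ * (t + p)⁻¹

noncomputable def RG (x y z : ℝ) : ℝ :=
  (1/4) * ∫ t in Set.Ioi (0:ℝ),
    (Real.sqrt ((t + x) * (t + y) * (t + z)))⁻¹ *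
      (x / (t + x) + y / (t + y) + z / (t + z)) * t

/-- Antiderivative used throughout. -/
noncomputable def Gaux (a c t : ℝ) : ℝ :=
  c⁻¹ * (Real.log (Real.sqrt (t + a) - c) - Real.log (Real.sqrt (t + a) + c))

lemma Gaux_hasDerivAt (a c t : ℝ) (hc : 0 < c) (ht : 0 < t + a)
    (hne : Real.sqrt (t + a) ≠ c) :
    HasDerivAt (Gaux a c) ((Real.sqrt (t + a))⁻¹ * (t + a - c ^ 2)⁻¹) t := by
  set u := Real.sqrt (t + a) with hu
  have hupos : 0 < u := Real.sqrt_pos.2 ht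
  have husq : u ^ 2 = t + a := Real.sq_sqrt ht.le
  have hadd : HasDerivAt (fun t : ℝ => t + a) 1 t := (hasDerivAt_id t).add_const a
  have hsq : HasDerivAt (fun t : ℝ => Real.sqrt (t + a)) (1 / (2 * u) * 1) t :=
    (Real.hasDerivAt_sqrt ht.ne').comp t hadd
  have h1 : HasDerivAt (fun t : ℝ => Real.log (Real.sqrt (t + a) - c))
      ((u - c)⁻¹ * (1 / (2 * u) * 1)) t :=
    by have := (Real.hasDerivAt_log (sub_ne_zero.2 hne)).comp t (hsq.sub_const c); exact this
  have h2 : HasDerivAt (fun t : ℝ => Real.log (Real.sqrt (t + a) + c))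
      ((u + c)⁻¹ * (1 / (2 * u) * 1)) t :=
    (Real.hasDerivAt_log (by positivity)).comp t (hsq.add_const c)
  have h := (h1.sub h2).const_mul c⁻¹
  refine h.congr_deriv ?_
  have h3 : u - c ≠ 0 := sub_ne_zero.2 hne
  have h4 : u + c ≠ 0 := by positivity
  have h5 : t + a - c ^ 2 = (u - c) * (u + c) := by rw [← husq]; ring
  rw [h5]
  field_simp
  ring

lemma Gaux_tendsto (a c : ℝ) (hc : 0 < c) :
    Filter.Tendsto (Gaux a c) Filter.atTop (nhds 0) := by
  have hsqrt : Filter.Tendsto (fun t : ℝ => Real.sqrt (t + a)) Filter.atTop Filter.atTop := by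
    rw [Filter.tendsto_atTop_atTop]
    intro b
    refine ⟨(max b 0) ^ 2 - a, fun t ht => ?_⟩
    have h1 : (max b 0) ^ 2 ≤ t + a := by linarith
    have := Real.sqrt_le_sqrt h1
    rw [Real.sqrt_sq (le_max_right b 0)] at this
    exact le_trans (le_max_left b 0) this
  have hratio : Filter.Tendsto (fun u : ℝ => (u - c) / (u + c)) Filter.atTop (nhds 1) := by
    have h0 : Filter.Tendsto (fun u : ℝ => 2 * c / (u + c)) Filter.atTop (nhds 0) :=
      Filter.Tendsto.div_atTop tendsto_const_nhds
        (Filter.tendsto_atTop_add_const_right _ c Filter.tendsto_id)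
    have h1 : Filter.Tendsto (fun u : ℝ => 1 - 2 * c / (u + c)) Filter.atTop (nhds (1 - 0)) :=
      tendsto_const_nhds.sub h0
    rw [sub_zero] at h1
    refine h1.congr' ?_
    filter_upwards [Filter.eventually_gt_atTop c] with u hu
    have : u + c ≠ 0 := ne_of_gt (by linarith)
    field_simp
    ring
  have hlog : Filter.Tendsto (fun u : ℝ => c⁻¹ * Real.log ((u - c) / (u + c)))
      Filter.atTop (nhds (c⁻¹ * Real.log 1)) :=
    ((Real.continuousAt_log one_ne_zero).tendsto.comp hratio).const_mul _
  rw [Real.log_one, mul_zero] at hlog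
  refine (hlog.comp hsqrt).congr' ?_
  filter_upwards [hsqrt.eventually (Filter.eventually_gt_atTop c)] with t ht
  have h3 : Real.sqrt (t + a) - c ≠ 0 := sub_ne_zero.2 ht.ne'
  have h4 : Real.sqrt (t + a) + c ≠ 0 := by positivity
  simp only [Function.comp, Gaux, Real.log_div h3 h4]

theorem stmt7 (x y : ℝ) (hx : 0 < x) (hy : 0 < y) (L : ℝ)
    (hL : Filter.Tendsto
      (fun ε : ℝ => (1/2) * ∫ t in Set.Ioo (0:ℝ) (y - ε) ∪ Set.Ioi (y + ε),
        (Real.sqrt (t + x))⁻¹ * (t - y)⁻¹)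
      (nhdsWithin 0 (Set.Ioi 0)) (nhds L)) :
    L = Real.sqrt (x / (x + y)) * RC (x + y) y := by
  have hxy : (0:ℝ) < x + y := by linarith
  set s := Real.sqrt (x + y) with hs
  have hspos : 0 < s := Real.sqrt_pos.2 hxy
  have hs2 : s ^ 2 = x + y := Real.sq_sqrt hxy.le
  have hsx : Real.sqrt x < s := by
    apply Real.sqrt_lt_sqrt hx.le; linarith
  have hxpos : 0 < Real.sqrt x := Real.sqrt_pos.2 hx
  -- derivative of Gaux x s is the principal-value integrand
  have hderiv1 : ∀ t : ℝ, 0 < t + x → t ≠ y →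
      HasDerivAt (Gaux x s) ((Real.sqrt (t + x))⁻¹ * (t - y)⁻¹) t := by
    intro t ht hty
    have hne : Real.sqrt (t + x) ≠ s := by
      intro h
      have := congrArg (fun z => z ^ 2) h
      simp only [Real.sq_sqrt ht.le, hs2] at this
      exact hty (by linarith)
    have := Gaux_hasDerivAt x s t hspos ht hne
    have he : t + x - s ^ 2 = t - y := by rw [hs2]; ring
    rwa [he] at this
  -- the integral over the union, for 0 < ε < y
  have key : ∀ ε ∈ Set.Ioo (0:ℝ) y,
      (∫ t in Set.Ioo (0:ℝ) (y - ε) ∪ Set.Ioi (y + ε),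
        (Real.sqrt (t + x))⁻¹ * (t - y)⁻¹)
      = Gaux x s (y - ε) - Gaux x s (y + ε) - Gaux x s 0 := by
    intro ε hε
    obtain ⟨hε0, hεy⟩ := hε
    have hb : (0:ℝ) < y - ε := by linarith
    -- continuity on [0, y-ε]
    have hcont : ContinuousOn (fun t => (Real.sqrt (t + x))⁻¹ * (t - y)⁻¹)
        (Set.Icc (0:ℝ) (y - ε)) := by
      apply ContinuousOn.mul
      · apply ContinuousOn.inv₀
        · exact (Real.continuous_sqrt.comp (continuous_id.add continuous_const)).continuousOn
        · intro t ht
          have : 0 < t + x := by have := ht.1; linarith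
          exact (Real.sqrt_pos.2 this).ne'
      · apply ContinuousOn.inv₀
        · exact (continuous_id.sub continuous_const).continuousOn
        · intro t ht
          have := ht.2
          intro h
          have : t = y := by linarith [sub_eq_zero.1 h]
          linarith [ht.2]
    -- part A : integral over Ioo 0 (y-ε)
    have hA : (∫ t in Set.Ioo (0:ℝ) (y - ε), (Real.sqrt (t + x))⁻¹ * (t - y)⁻¹)
        = Gaux x s (y - ε) - Gaux x s 0 := by
      rw [← MeasureTheory.integral_Ioc_eq_integral_Ioo,
        ← intervalIntegral.integral_of_le hb.le]
      apply intervalIntegral.integral_eq_sub_of_hasDerivAt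
      · intro t ht
        rw [Set.uIcc_of_le hb.le] at ht
        exact hderiv1 t (by linarith [ht.1]) (by linarith [ht.2])
      · rw [intervalIntegrable_iff_integrableOn_Ioc_of_le hb.le]
        exact (hcont.integrableOn_Icc).mono_set Set.Ioc_subset_Icc_self
    -- part B : integral over Ioi (y+ε)
    have hderivB : ∀ t ∈ Set.Ici (y + ε),
        HasDerivAt (Gaux x s) ((Real.sqrt (t + x))⁻¹ * (t - y)⁻¹) t := by
      intro t ht
      have ht' : y + ε ≤ t := ht
      exact hderiv1 t (by linarith) (by linarith)
    have hposB : ∀ t ∈ Set.Ioi (y + ε), 0 ≤ (Real.sqrt (t + x))⁻¹ * (t - y)⁻¹ := by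
      intro t ht
      have ht' : y + ε < t := ht
      have h1 : 0 ≤ (Real.sqrt (t + x))⁻¹ := by positivity
      have h2 : 0 ≤ (t - y)⁻¹ := by
        apply inv_nonneg.2; linarith
      exact mul_nonneg h1 h2
    have hB : (∫ t in Set.Ioi (y + ε), (Real.sqrt (t + x))⁻¹ * (t - y)⁻¹)
        = 0 - Gaux x s (y + ε) :=
      integral_Ioi_of_hasDerivAt_of_nonneg' hderivB hposB (Gaux_tendsto x s hspos)
    -- integrability
    have hintA : IntegrableOn (fun t => (Real.sqrt (t + x))⁻¹ * (t - y)⁻¹)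
        (Set.Ioo (0:ℝ) (y - ε)) :=
      (hcont.integrableOn_Icc).mono_set Set.Ioo_subset_Icc_self
    have hintB : IntegrableOn (fun t => (Real.sqrt (t + x))⁻¹ * (t - y)⁻¹)
        (Set.Ioi (y + ε)) :=
      integrableOn_Ioi_deriv_of_nonneg' hderivB hposB (Gaux_tendsto x s hspos)
    have hdisj : Disjoint (Set.Ioo (0:ℝ) (y - ε)) (Set.Ioi (y + ε)) := by
      rw [Set.disjoint_left]
      intro t ht ht'
      have := ht.2
      have : y + ε < t := ht'
      linarith [ht.2]
    rw [MeasureTheory.setIntegral_union hdisj measurableSet_Ioi hintA hintB, hA, hB]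
    ring
  -- limit of the explicit formula
  have hlim : Filter.Tendsto
      (fun ε : ℝ => (1/2) * (Gaux x s (y - ε) - Gaux x s (y + ε) - Gaux x s 0))
      (nhdsWithin 0 (Set.Ioi 0)) (nhds (-(1/2) * Gaux x s 0)) := by
    have hD : ∀ ε ∈ Set.Ioo (0:ℝ) y,
        Gaux x s (y - ε) - Gaux x s (y + ε)
        = s⁻¹ * (2 * Real.log (Real.sqrt (x + y + ε) + s)
            - 2 * Real.log (Real.sqrt (x + y - ε) + s)) := by
      intro ε hε
      obtain ⟨hε0, hεy⟩ := hε
      have hm : (0:ℝ) < x + y - ε := by linarith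
      have hp : (0:ℝ) < x + y + ε := by linarith
      set u₁ := Real.sqrt (x + y - ε) with hu₁
      set u₂ := Real.sqrt (x + y + ε) with hu₂
      have hu₁pos : 0 < u₁ := Real.sqrt_pos.2 hm
      have hu₂pos : 0 < u₂ := Real.sqrt_pos.2 hp
      have hu₁sq : u₁ ^ 2 = x + y - ε := Real.sq_sqrt hm.le
      have hu₂sq : u₂ ^ 2 = x + y + ε := Real.sq_sqrt hp.le
      have h1 : s - u₁ = ε / (s + u₁) := by
        rw [eq_div_iff (by positivity)]
        nlinarith [hs2, hu₁sq]
      have h2 : u₂ - s = ε / (u₂ + s) := by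
        rw [eq_div_iff (by positivity)]
        nlinarith [hs2, hu₂sq]
      have e1 : y - ε + x = x + y - ε := by ring
      have e2 : y + ε + x = x + y + ε := by ring
      have hlog1 : Real.log (u₁ - s) = Real.log ε - Real.log (s + u₁) := by
        rw [← Real.log_neg_eq_log, neg_sub, h1, Real.log_div hε0.ne' (by positivity)]
      have hlog2 : Real.log (u₂ - s) = Real.log ε - Real.log (u₂ + s) := by
        rw [h2, Real.log_div hε0.ne' (by positivity)]
      simp only [Gaux, e1, e2, ← hu₁, ← hu₂, hlog1, hlog2]
      have : u₁ + s = s + u₁ := by ring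
      rw [this]
      ring
    -- continuity of ε ↦ log(√(x+y±ε)+s)
    have hc1 : Filter.Tendsto (fun ε : ℝ => Real.log (Real.sqrt (x + y + ε) + s))
        (nhdsWithin 0 (Set.Ioi 0)) (nhds (Real.log (Real.sqrt (x + y) + s))) := by
      apply Filter.Tendsto.mono_left _ nhdsWithin_le_nhds
      have : ContinuousAt (fun ε : ℝ => Real.log (Real.sqrt (x + y + ε) + s)) 0 := by
        apply ContinuousAt.comp'
        · exact Real.continuousAt_log (by positivity)
        · exact ((Real.continuous_sqrt.comp (continuous_const.add continuous_id)).add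
            continuous_const).continuousAt
      simpa using this.tendsto
    have hc2 : Filter.Tendsto (fun ε : ℝ => Real.log (Real.sqrt (x + y - ε) + s))
        (nhdsWithin 0 (Set.Ioi 0)) (nhds (Real.log (Real.sqrt (x + y) + s))) := by
      apply Filter.Tendsto.mono_left _ nhdsWithin_le_nhds
      have : ContinuousAt (fun ε : ℝ => Real.log (Real.sqrt (x + y - ε) + s)) 0 := by
        apply ContinuousAt.comp'
        · exact Real.continuousAt_log (by positivity)
        · exact ((Real.continuous_sqrt.comp (continuous_const.sub continuous_id)).add
            continuous_const).continuousAt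
      simpa using this.tendsto
    have hDlim : Filter.Tendsto
        (fun ε : ℝ => Gaux x s (y - ε) - Gaux x s (y + ε))
        (nhdsWithin 0 (Set.Ioi 0)) (nhds 0) := by
      have h0 : Filter.Tendsto
          (fun ε : ℝ => s⁻¹ * (2 * Real.log (Real.sqrt (x + y + ε) + s)
            - 2 * Real.log (Real.sqrt (x + y - ε) + s)))
          (nhdsWithin 0 (Set.Ioi 0))
          (nhds (s⁻¹ * (2 * Real.log (Real.sqrt (x + y) + s)
            - 2 * Real.log (Real.sqrt (x + y) + s)))) :=
        ((hc1.const_mul 2).sub (hc2.const_mul 2)).const_mul _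
      simp only [sub_self, mul_zero] at h0
      refine h0.congr' ?_ |>.mono_left le_rfl
      · filter_upwards [Ioo_mem_nhdsGT_of_mem (Set.mem_Ico.2 ⟨le_refl (0:ℝ), hy⟩)] with ε hε
        exact (hD ε hε).symm
    have := (hDlim.sub_const (Gaux x s 0)).const_mul (1/2 : ℝ)
    simp only [zero_sub, mul_neg] at this
    convert this using 2
    ring
  -- identify L
  have heq : ∀ᶠ ε in nhdsWithin (0:ℝ) (Set.Ioi 0),
      (1/2) * (∫ t in Set.Ioo (0:ℝ) (y - ε) ∪ Set.Ioi (y + ε),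
        (Real.sqrt (t + x))⁻¹ * (t - y)⁻¹)
      = (1/2) * (Gaux x s (y - ε) - Gaux x s (y + ε) - Gaux x s 0) := by
    filter_upwards [Ioo_mem_nhdsGT_of_mem (Set.mem_Ico.2 ⟨le_refl (0:ℝ), hy⟩)] with ε hε
    rw [key ε hε]
  have hL' : L = -(1/2) * Gaux x s 0 :=
    tendsto_nhds_unique (hL.congr' heq) hlim
  -- compute RC (x+y) y
  have hderiv2 : ∀ t ∈ Set.Ici (0:ℝ),
      HasDerivAt (Gaux (x + y) (Real.sqrt x))
        ((Real.sqrt (t + (x + y)))⁻¹ * (t + y)⁻¹) t := by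
    intro t ht
    have ht' : (0:ℝ) ≤ t := ht
    have h1 : 0 < t + (x + y) := by linarith
    have hne : Real.sqrt (t + (x + y)) ≠ Real.sqrt x := by
      intro h
      have := congrArg (fun z => z ^ 2) h
      simp only [Real.sq_sqrt h1.le, Real.sq_sqrt hx.le] at this
      linarith
    have := Gaux_hasDerivAt (x + y) (Real.sqrt x) t hxpos h1 hne
    have he : t + (x + y) - Real.sqrt x ^ 2 = t + y := by
      rw [Real.sq_sqrt hx.le]; ring
    rwa [he] at this
  have hpos2 : ∀ t ∈ Set.Ioi (0:ℝ),
      0 ≤ (Real.sqrt (t + (x + y)))⁻¹ * (t + y)⁻¹ := by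
    intro t ht
    have : (0:ℝ) < t := ht
    positivity
  have hRCint : (∫ t in Set.Ioi (0:ℝ), (Real.sqrt (t + (x + y)))⁻¹ * (t + y)⁻¹)
      = 0 - Gaux (x + y) (Real.sqrt x) 0 :=
    integral_Ioi_of_hasDerivAt_of_nonneg' hderiv2 hpos2
      (Gaux_tendsto (x + y) (Real.sqrt x) hxpos)
  have hRC : RC (x + y) y = -(1/2) * Gaux (x + y) (Real.sqrt x) 0 := by
    rw [RC, hRCint]; ring
  -- final algebra
  rw [hL', hRC]
  have hsqrtdiv : Real.sqrt (x / (x + y)) = Real.sqrt x / s := by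
    rw [hs, Real.sqrt_div hx.le]
  have hzx : (0:ℝ) + x = x := by ring
  have hzxy : (0:ℝ) + (x + y) = x + y := by ring
  have hGa : Gaux x s 0 = s⁻¹ * (Real.log (Real.sqrt x - s) - Real.log (Real.sqrt x + s)) := by
    rw [Gaux, hzx]
  have hGb : Gaux (x + y) (Real.sqrt x) 0
      = (Real.sqrt x)⁻¹ * (Real.log (s - Real.sqrt x) - Real.log (s + Real.sqrt x)) := by
    rw [Gaux, hzxy, ← hs]
  have hflip : Real.log (Real.sqrt x - s) = Real.log (s - Real.sqrt x) := by
    rw [← Real.log_neg_eq_log, neg_sub]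
  have hcomm : Real.log (Real.sqrt x + s) = Real.log (s + Real.sqrt x) := by
    rw [add_comm]
  rw [hGa, hGb, hflip, hcomm, hsqrtdiv]
  field_simp
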